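/- Let E be a finite-dimensional real inner product space with dim E ≥ 1, and let T : E → E be a self-adjoint positive-definite linear map (⟨Tv, v⟩ > 0 for all v ≠ 0), which is therefore invertible. Then for every v ∈ E one has sup_{S ∈ E, S ≠ 0} ⟨v, S⟩² / ⟨T S, S⟩ = ⟨T⁻¹ v, v⟩. -/

import Mathlib

private lemma cs_aux {E : Type*} [NormedAddCommGroup E] [InnerProductSpace ℝ E]
    (T : E →ₗ[ℝ] E)
    (hsa : ∀ u w : E, (inner ℝ (T u) w : ℝ) = inner ℝ u (T w))
    (hpos : ∀ v : E, v ≠ 0 → 0 < (inner ℝ (T v) v : ℝ))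
    (w S : E) : (inner ℝ (T w) S : ℝ) ^ 2 ≤ (inner ℝ (T w) w : ℝ) * (inner ℝ (T S) S : ℝ) := by
  have hnn : ∀ u : E, 0 ≤ (inner ℝ (T u) u : ℝ) := by
    intro u
    rcases eq_or_ne u 0 with h | h
    · simp [h]
    · exact le_of_lt (hpos u h)
  have key : ∀ t : ℝ, 0 ≤ (inner ℝ (T S) S : ℝ) * t ^ 2 + (2 * (inner ℝ (T w) S : ℝ)) * t
      + (inner ℝ (T w) w : ℝ) := by
    intro t
    have h1 : (inner ℝ (T (w + t • S)) (w + t • S) : ℝ)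
        = (inner ℝ (T S) S : ℝ) * t ^ 2 + (2 * (inner ℝ (T w) S : ℝ)) * t
          + (inner ℝ (T w) w : ℝ) := by
      have hsym : (inner ℝ (T S) w : ℝ) = (inner ℝ (T w) S : ℝ) := by
        rw [hsa S w, real_inner_comm]
      simp only [map_add, map_smul, inner_add_left, inner_add_right, inner_smul_left,
        inner_smul_right, RCLike.star_def, starRingEnd_apply, star_trivial]
      rw [hsym]; ring
    rw [← h1]; exact hnn _
  have hd := discrim_le_zero (a := (inner ℝ (T S) S : ℝ)) (b := 2 * (inner ℝ (T w) S : ℝ))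
    (c := (inner ℝ (T w) w : ℝ)) (fun x => by have := key x; nlinarith)
  rw [discrim] at hd
  nlinarith [hd]

/-- For a self-adjoint positive-definite linear map `T` on a finite-dimensional real inner
product space (which is therefore invertible), one has
`sup_{S ≠ 0} ⟨v,S⟩² / ⟨TS,S⟩ = ⟨T⁻¹ v, v⟩` for every `v`. -/
theorem sup_inner_sq_div_eq_inner_inv
    (E : Type*) [NormedAddCommGroup E] [InnerProductSpace ℝ E] [FiniteDimensional ℝ E]
    (hdim : 1 ≤ Module.finrank ℝ E)
    (T : E →ₗ[ℝ] E)
    (hsa : ∀ u w : E, (inner ℝ (T u) w : ℝ) = inner ℝ u (T w))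
    (hpos : ∀ v : E, v ≠ 0 → 0 < (inner ℝ (T v) v : ℝ)) :
    ∃ Tinv : E →ₗ[ℝ] E, Tinv ∘ₗ T = LinearMap.id ∧ T ∘ₗ Tinv = LinearMap.id ∧
      ∀ v : E,
        (⨆ S : {S : E // S ≠ 0}, (inner ℝ v (S : E) : ℝ) ^ 2 / (inner ℝ (T (S : E)) (S : E) : ℝ))
          = inner ℝ (Tinv v) v := by
  -- T is injective, hence bijective
  have hinj : Function.Injective T := by
    rw [← LinearMap.ker_eq_bot, LinearMap.ker_eq_bot']
    intro m hm
    by_contra h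
    have := hpos m h
    rw [hm] at this
    simp at this
  have hbij : Function.Bijective T :=
    ⟨hinj, (LinearMap.injective_iff_surjective).mp hinj⟩
  let e := LinearEquiv.ofBijective T hbij
  refine ⟨(e.symm : E →ₗ[ℝ] E), ?_, ?_, ?_⟩
  · ext x; exact e.symm_apply_apply x
  · ext x; exact e.apply_symm_apply x
  intro v
  -- nonempty index type
  have hne : ∃ S : E, S ≠ 0 := by
    by_contra h
    push_neg at h
    have : Module.finrank ℝ E = 0 := by
      have : Subsingleton E := ⟨fun a b => by rw [h a, h b]⟩
      exact Module.finrank_zero_of_subsingleton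
    omega
  obtain ⟨S₀, hS₀⟩ := hne
  haveI : Nonempty {S : E // S ≠ 0} := ⟨⟨S₀, hS₀⟩⟩
  set w : E := e.symm v with hw
  have hTw : T w = v := e.apply_symm_apply v
  have hgoal : (inner ℝ ((e.symm : E →ₗ[ℝ] E) v) v : ℝ) = (inner ℝ (T w) w : ℝ) := by
    rw [hTw, real_inner_comm]
    rfl
  rw [hgoal]
  -- upper bound for each term
  have hub : ∀ S : {S : E // S ≠ 0},
      (inner ℝ v (S : E) : ℝ) ^ 2 / (inner ℝ (T (S : E)) (S : E) : ℝ)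
        ≤ (inner ℝ (T w) w : ℝ) := by
    rintro ⟨S, hS⟩
    have hp : 0 < (inner ℝ (T S) S : ℝ) := hpos S hS
    rw [div_le_iff₀ hp]
    have := cs_aux T hsa hpos w S
    rw [← hTw]
    linarith
  rcases eq_or_ne v 0 with hv | hv
  · -- all terms zero
    have hw0 : w = 0 := by
      apply hinj; rw [hTw, hv, map_zero]
    have : ∀ S : {S : E // S ≠ 0},
        (inner ℝ v (S : E) : ℝ) ^ 2 / (inner ℝ (T (S : E)) (S : E) : ℝ) = 0 := by
      intro S; simp [hv]
    have h0 : (⨆ S : {S : E // S ≠ 0},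
        (inner ℝ v (S : E) : ℝ) ^ 2 / (inner ℝ (T (S : E)) (S : E) : ℝ))
        = ⨆ _ : {S : E // S ≠ 0}, (0 : ℝ) := congrArg _ (funext this)
    rw [h0, ciSup_const, hw0]
    simp
  · have hw0 : w ≠ 0 := by
      intro h; apply hv; rw [← hTw, h, map_zero]
    apply le_antisymm
    · exact ciSup_le hub
    · have hmem : (inner ℝ (T w) w : ℝ)
          = (inner ℝ v (w : E) : ℝ) ^ 2 / (inner ℝ (T w) w : ℝ) := by
        rw [← hTw]
        have hne : (inner ℝ (T w) w : ℝ) ≠ 0 := ne_of_gt (hpos w hw0)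
        rw [sq, mul_div_assoc, div_self hne, mul_one]
      rw [hmem]
      exact le_ciSup ⟨(inner ℝ (T w) w : ℝ), Set.forall_mem_range.mpr hub⟩ ⟨w, hw0⟩
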